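/- arXiv:2206.13713 — 2 statements merged into one kernel-verified Lean document; each statement's English description precedes it below -/
import Mathlib

section
/- Let m > 0 and θ ≥ 0, and define f(r) = r⁴ − 4r² − 4m² log(1 + r^{2θ}) for r ≥ 0. Then there exists a unique δ > 0 such that f(r) < 0 for 0 < r < δ and f(r) ≥ 0 for r ≥ δ; moreover δ > 2. -/
open Real

noncomputable section

/-- `f(r) = r⁴ − 4r² − 4m² log(1 + r^{2θ})`. -/
def fChar (m θ r : ℝ) : ℝ :=
  r ^ 4 - 4 * r ^ 2 - 4 * m ^ 2 * Real.log (1 + r ^ (2 * θ))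

namespace Stmt6Aux

open Set

lemma xpos (θ : ℝ) {r : ℝ} (hr : 0 < r) : 0 < r ^ (2 * θ) :=
  Real.rpow_pos_of_pos hr _

lemma L_pos (θ : ℝ) {r : ℝ} (hr : 0 < r) : 0 < Real.log (1 + r ^ (2 * θ)) :=
  Real.log_pos (by linarith [xpos θ hr])

lemma contL (θ : ℝ) (hθ : 0 ≤ θ) :
    ContinuousOn (fun r : ℝ => Real.log (1 + r ^ (2 * θ))) (Ici 2) := by
  have hc : Continuous (fun r : ℝ => 1 + r ^ (2 * θ)) := by
    refine continuous_const.add ?_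
    exact continuous_iff_continuousAt.mpr fun x =>
      Real.continuousAt_rpow_const x _ (Or.inr (by positivity))
  refine hc.continuousOn.log ?_
  intro r hr
  have hr0 : (0:ℝ) < r := lt_of_lt_of_le two_pos hr
  have := xpos θ hr0
  exact (by linarith : (0:ℝ) < 1 + r ^ (2*θ)).ne'

/-- The auxiliary function `F(r) = (r⁴ − 4r²)/log(1 + r^{2θ})` is strictly
increasing on `[2, ∞)`. -/
lemma Fmono (θ : ℝ) (hθ : 0 ≤ θ) :
    StrictMonoOn (fun r : ℝ => (r ^ 4 - 4 * r ^ 2) / Real.log (1 + r ^ (2 * θ)))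
      (Ici 2) := by
  have hcont : ContinuousOn
      (fun r : ℝ => (r ^ 4 - 4 * r ^ 2) / Real.log (1 + r ^ (2 * θ))) (Ici 2) := by
    refine ContinuousOn.div ?_ (contL θ hθ) ?_
    · exact ((continuous_pow 4).sub (continuous_const.mul (continuous_pow 2))).continuousOn
    · intro r hr; exact (L_pos θ (lt_of_lt_of_le two_pos hr)).ne'
  refine strictMonoOn_of_deriv_pos (convex_Ici 2) hcont ?_
  intro r hr
  rw [interior_Ici] at hr
  have hr2 : (2:ℝ) < r := hr
  have hr0 : (0:ℝ) < r := by linarith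
  have hx : 0 < r ^ (2*θ) := xpos θ hr0
  set x := r ^ (2*θ) with hxdef
  have hL : 0 < Real.log (1 + x) := L_pos θ hr0
  have hN : HasDerivAt (fun s : ℝ => s ^ 4 - 4 * s ^ 2) (4 * r ^ 3 - 8 * r) r := by
    have h1 := hasDerivAt_pow 4 r
    have h2 := (hasDerivAt_pow 2 r).const_mul (4 : ℝ)
    refine (h1.sub h2).congr_deriv ?_
    push_cast; ring
  have hxd : HasDerivAt (fun s : ℝ => s ^ (2*θ)) (2*θ * r ^ (2*θ - 1)) r :=
    Real.hasDerivAt_rpow_const (Or.inl hr0.ne')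
  have hLd : HasDerivAt (fun s : ℝ => Real.log (1 + s ^ (2*θ)))
      (2*θ * r ^ (2*θ - 1) / (1 + x)) r := by
    have := ((hasDerivAt_const r (1:ℝ)).add hxd).log
      (show (0:ℝ) < 1 + x by linarith).ne'
    simpa using this
  have hF : HasDerivAt
      (fun s : ℝ => (s ^ 4 - 4 * s ^ 2) / Real.log (1 + s ^ (2*θ)))
      (((4 * r ^ 3 - 8 * r) * Real.log (1 + x)
        - (r ^ 4 - 4 * r ^ 2) * (2*θ * r ^ (2*θ - 1) / (1 + x)))
        / (Real.log (1 + x)) ^ 2) r := hN.div hLd hL.ne'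
  rw [hF.deriv]
  apply div_pos _ (by positivity)
  have ht : r ^ (2*θ - 1) = x / r := by
    rw [hxdef, Real.rpow_sub hr0, Real.rpow_one]
  rw [ht]
  -- bound the log from below
  have h3 : 2*θ*Real.log 2 < Real.log (1 + x) := by
    have hlx : Real.log x = 2*θ*Real.log r := Real.log_rpow hr0 _
    have h4 : Real.log x < Real.log (1+x) := Real.log_lt_log hx (by linarith)
    have h5 : 2*θ*Real.log 2 ≤ 2*θ*Real.log r := by
      have := Real.log_le_log (by norm_num : (0:ℝ) < 2) hr2.le
      nlinarith [this, hθ]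
    linarith [hlx ▸ h4]
  have h4r : (4:ℝ) < r^2 := by nlinarith
  have hB : (0:ℝ) < r^3 - 4*r := by
    nlinarith [mul_pos hr0 (show (0:ℝ) < r^2 - 4 by linarith)]
  have hA : (0:ℝ) < 4*r^3 - 8*r := by nlinarith
  have hterm : (r^4 - 4*r^2) * (2*θ * (x/r) / (1+x)) ≤ 2*θ*(r^3 - 4*r) := by
    have heq : (r^4 - 4*r^2) * (2*θ * (x/r) / (1+x))
        = 2*θ*(r^3-4*r) * (x/(1+x)) := by
      field_simp
    rw [heq]
    have hx1 : x/(1+x) ≤ 1 := by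
      rw [div_le_one (by linarith)]; linarith
    have hpos : 0 ≤ 2*θ*(r^3-4*r) := by positivity
    calc 2*θ*(r^3-4*r) * (x/(1+x)) ≤ 2*θ*(r^3-4*r) * 1 :=
          mul_le_mul_of_nonneg_left hx1 hpos
      _ = 2*θ*(r^3-4*r) := by ring
  have hAL : 2*θ*(r^3 - 4*r) < (4*r^3 - 8*r) * Real.log (1 + x) := by
    have h6 : (4*r^3-8*r)*(2*θ*Real.log 2) < (4*r^3-8*r)*Real.log (1+x) :=
      mul_lt_mul_of_pos_left h3 hA
    have h7 : (0.6931471803:ℝ) < Real.log 2 := Real.log_two_gt_d9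
    nlinarith [mul_nonneg hθ hB.le, mul_nonneg (mul_nonneg hθ hB.le) hr0.le,
      mul_nonneg hθ (mul_nonneg hB.le hr0.le)]
  linarith

end Stmt6Aux

/-- unique sign-changing point `δ` of `f`, and `δ > 2`. -/
theorem stmt6 (m θ : ℝ) (hm : 0 < m) (hθ : 0 ≤ θ) :
    ∃ δ : ℝ, 2 < δ ∧ 0 < δ ∧
      (∀ r : ℝ, 0 < r → r < δ → fChar m θ r < 0) ∧
      (∀ r : ℝ, δ ≤ r → 0 ≤ fChar m θ r) ∧
      ∀ δ' : ℝ, 0 < δ' → (∀ r : ℝ, 0 < r → r < δ' → fChar m θ r < 0) →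
        (∀ r : ℝ, δ' ≤ r → 0 ≤ fChar m θ r) → δ' = δ := by
  classical
  open Set Stmt6Aux in
  -- a big point where f is positive
  set R : ℝ := 3 + 4*m^2 + 8*m^2*θ with hRdef
  have hR3 : (3:ℝ) ≤ R := by nlinarith
  have hR2 : (2:ℝ) < R := by linarith
  have hR0 : (0:ℝ) < R := by linarith
  have hRx : (1:ℝ) ≤ R ^ (2*θ) := Real.one_le_rpow (by linarith) (by positivity)
  have hRbig : 0 < fChar m θ R := by
    have hlog1 : Real.log (1 + R ^ (2*θ)) ≤ Real.log (2 * R ^ (2*θ)) := by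
      apply Real.log_le_log (by linarith)
      linarith
    have hlog2 : Real.log (2 * R ^ (2*θ)) = Real.log 2 + 2*θ*Real.log R := by
      rw [Real.log_mul (by norm_num) (by positivity), Real.log_rpow hR0]
    have hlog3 : Real.log 2 ≤ 1 := by
      have := Real.log_two_lt_d9
      linarith
    have hlog4 : Real.log R ≤ R := by
      have := Real.log_le_sub_one_of_pos hR0
      linarith
    have hL : Real.log (1 + R ^ (2*θ)) ≤ 1 + 2*θ*R := by
      have : 2*θ*Real.log R ≤ 2*θ*R := by nlinarith
      linarith [hlog1, hlog2 ▸ hlog1]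
    have h1 : 4*m^2 ≤ R := by nlinarith
    have h2 : 8*m^2*θ ≤ R := by nlinarith
    have hR4 : 9*R^2 ≤ R^4 := by
      nlinarith [mul_nonneg (mul_pos hR0 hR0).le (show (0:ℝ) ≤ R^2 - 9 by nlinarith)]
    have hstep1 : 4*m^2 * Real.log (1 + R ^ (2*θ)) ≤ 4*m^2 * (1 + 2*θ*R) :=
      mul_le_mul_of_nonneg_left hL (by positivity)
    have hstep2 : 4*m^2 * (1 + 2*θ*R) = 4*m^2 + 8*m^2*θ*R := by ring
    have hstep3 : 8*m^2*θ*R ≤ R*R := mul_le_mul_of_nonneg_right h2 hR0.le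
    have hRR : 3*R ≤ R^2 := by nlinarith
    unfold fChar
    nlinarith [hstep1, hstep3, hR4, hRR, h1]
  -- f 2 < 0
  have hf2 : fChar m θ 2 < 0 := by
    have hl := L_pos θ (show (0:ℝ) < 2 by norm_num)
    have hm2 : 0 < 4*m^2 := by positivity
    unfold fChar
    nlinarith [mul_pos hm2 hl]
  -- continuity on [2, R]
  have hcont : ContinuousOn (fChar m θ) (Icc 2 R) := by
    have : ContinuousOn (fChar m θ) (Ici 2) := by
      unfold fChar
      exact (((continuous_pow 4).sub (continuous_const.mul (continuous_pow 2))).continuousOn).sub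
        ((continuous_const.continuousOn).mul (contL θ hθ))
    exact this.mono Icc_subset_Ici_self
  -- IVT
  obtain ⟨δ, hδmem, hδ0⟩ : ∃ δ ∈ Icc (2:ℝ) R, fChar m θ δ = 0 := by
    have h0 : (0:ℝ) ∈ Icc (fChar m θ 2) (fChar m θ R) := ⟨hf2.le, hRbig.le⟩
    obtain ⟨δ, hmem, heq⟩ := intermediate_value_Icc hR2.le hcont h0
    exact ⟨δ, hmem, heq⟩
  have hδ2 : (2:ℝ) < δ := by
    rcases lt_or_eq_of_le hδmem.1 with h | h
    · exact h
    · exfalso; rw [← h] at hδ0; linarith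
  have hδpos : (0:ℝ) < δ := by linarith
  have hLδ : 0 < Real.log (1 + δ ^ (2*θ)) := L_pos θ hδpos
  have hNδ : δ ^ 4 - 4 * δ ^ 2 = 4*m^2 * Real.log (1 + δ ^ (2*θ)) := by
    unfold fChar at hδ0; linarith
  have hFδ : (δ ^ 4 - 4 * δ ^ 2) / Real.log (1 + δ ^ (2*θ)) = 4*m^2 := by
    rw [hNδ, mul_div_assoc, div_self hLδ.ne', mul_one]
  have hmono := Fmono θ hθ
  -- negativity below δ
  have hneg : ∀ r : ℝ, 0 < r → r < δ → fChar m θ r < 0 := by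
    intro r hr0 hrδ
    have hLr : 0 < Real.log (1 + r ^ (2*θ)) := L_pos θ hr0
    rcases le_or_gt r 2 with h | h
    · have hN : r ^ 4 - 4 * r ^ 2 ≤ 0 := by
        nlinarith [mul_nonneg (mul_pos hr0 hr0).le (show (0:ℝ) ≤ 4 - r^2 by nlinarith)]
      have : 0 < 4*m^2 * Real.log (1 + r ^ (2*θ)) := by positivity
      unfold fChar; linarith
    · have hFlt := hmono (show r ∈ Ici (2:ℝ) from h.le) (show δ ∈ Ici (2:ℝ) from hδ2.le) hrδ
      have hFlt' : (r^4 - 4*r^2)/Real.log (1 + r^(2*θ))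
          < (δ^4 - 4*δ^2)/Real.log (1 + δ^(2*θ)) := hFlt
      rw [hFδ] at hFlt'
      have : r ^ 4 - 4 * r ^ 2 < 4*m^2 * Real.log (1 + r ^ (2*θ)) :=
        (div_lt_iff₀ hLr).mp hFlt'
      unfold fChar; linarith
  -- nonnegativity above δ
  have hnn : ∀ r : ℝ, δ ≤ r → 0 ≤ fChar m θ r := by
    intro r hr
    rcases eq_or_lt_of_le hr with h | h
    · rw [← h, hδ0]
    · have hr2 : (2:ℝ) < r := lt_trans hδ2 h
      have hLr : 0 < Real.log (1 + r ^ (2*θ)) := L_pos θ (by linarith)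
      have hFgt := hmono (show δ ∈ Ici (2:ℝ) from hδ2.le) (show r ∈ Ici (2:ℝ) from hr2.le) h
      have hFgt' : (δ^4 - 4*δ^2)/Real.log (1 + δ^(2*θ))
          < (r^4 - 4*r^2)/Real.log (1 + r^(2*θ)) := hFgt
      rw [hFδ] at hFgt'
      have : 4*m^2 * Real.log (1 + r ^ (2*θ)) ≤ r ^ 4 - 4 * r ^ 2 :=
        ((le_div_iff₀ hLr).mp hFgt'.le)
      unfold fChar; linarith
  refine ⟨δ, hδ2, hδpos, hneg, hnn, ?_⟩
  intro δ' hδ'pos hneg' hnn'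
  by_contra hne
  rcases lt_or_gt_of_ne hne with h | h
  · -- δ' < δ
    set r := (δ' + δ)/2 with hrdef
    have h1 : 0 < r := by positivity
    have h2 : δ' ≤ r := by rw [hrdef]; linarith
    have h3 : r < δ := by rw [hrdef]; linarith
    exact absurd (hnn' r h2) (not_le.mpr (hneg r h1 h3))
  · -- δ < δ'
    set r := (δ + δ')/2 with hrdef
    have h1 : 0 < r := by positivity
    have h2 : δ ≤ r := by rw [hrdef]; linarith
    have h3 : r < δ' := by rw [hrdef]; linarith
    exact absurd (hnn r h2) (not_le.mpr (hneg' r h1 h3))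

end
end

section
/- There exist a constant C > 0 and a time t₀ > 1 such that for all t ≥ t₀, ∫₀^∞ e^{-w²} sin²(√t · w) / w dw ≥ C log t. -/
open MeasureTheory Real intervalIntegral

noncomputable section

lemma integrable_f (a : ℝ) :
    IntegrableOn (fun w => Real.exp (-w^2) * Real.sin (a*w)^2 / w) (Set.Ioi (0:ℝ)) := by
  have hmeas : ∀ s : Set ℝ, AEStronglyMeasurable (fun w => Real.exp (-w^2) * Real.sin (a*w)^2 / w)
      (volume.restrict s) := by
    intro s
    apply Measurable.aestronglyMeasurable
    fun_prop
  have hsplit : Set.Ioi (0:ℝ) = Set.Ioc 0 1 ∪ Set.Ioi 1 := by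
    rw [Set.Ioc_union_Ioi_eq_Ioi]; norm_num
  rw [hsplit]
  apply IntegrableOn.union
  · apply Integrable.mono' (g := fun _ => a^2)
    · exact integrableOn_const (by simp) (by simp)
    · exact hmeas _
    · rw [ae_restrict_iff' measurableSet_Ioc]
      filter_upwards with w hw
      obtain ⟨hw0, hw1⟩ := hw
      have h1 : Real.exp (-w^2) ≤ 1 := by
        rw [Real.exp_le_one_iff]; nlinarith [sq_nonneg w]
      have h2 : Real.sin (a*w)^2 ≤ a^2 * w^2 := by
        have := Real.sin_sq_le_sq (x := a*w)
        calc Real.sin (a*w)^2 ≤ (a*w)^2 := this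
          _ = a^2 * w^2 := by ring
      rw [Real.norm_eq_abs, abs_of_nonneg (by positivity)]
      calc Real.exp (-w^2) * Real.sin (a*w)^2 / w ≤ 1 * (a^2 * w^2) / w := by
            gcongr
        _ = a^2 * w := by field_simp
        _ ≤ a^2 * 1 := by nlinarith [sq_nonneg a]
        _ = a^2 := by ring
  · apply Integrable.mono' (g := fun w => Real.exp (-1 * w^2))
    · exact (integrable_exp_neg_mul_sq one_pos).integrableOn
    · exact hmeas _
    · rw [ae_restrict_iff' measurableSet_Ioi]
      filter_upwards with w hw
      have hw1 : (1:ℝ) < w := hw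
      have h2 : Real.sin (a*w)^2 ≤ 1 := by
        have := Real.neg_one_le_sin (a*w)
        have := Real.sin_le_one (a*w)
        nlinarith
      rw [Real.norm_eq_abs, abs_of_nonneg (by positivity)]
      rw [div_le_iff₀ (by linarith)]
      calc Real.exp (-w^2) * Real.sin (a*w)^2 ≤ Real.exp (-w^2) * 1 := by
            gcongr
        _ = Real.exp (-1*w^2) * 1 := by ring_nf
        _ ≤ Real.exp (-1*w^2) * w := by
            have : (0:ℝ) < Real.exp (-1*w^2) := Real.exp_pos _
            nlinarith

lemma cos_int_bound {a : ℝ} (ha : 1 ≤ a) : |∫ x in (1:ℝ)..a, Real.cos (2*x) / x| ≤ 3/2 := by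
  have hIcc : Set.uIcc (1:ℝ) a = Set.Icc 1 a := Set.uIcc_of_le ha
  have hpos : ∀ x ∈ Set.uIcc (1:ℝ) a, (1:ℝ) ≤ x := by
    intro x hx; rw [hIcc] at hx; exact hx.1
  -- IBP
  have hu : ∀ x ∈ Set.uIcc (1:ℝ) a, HasDerivAt (fun y : ℝ => y⁻¹) (-(x^2)⁻¹) x := by
    intro x hx
    have hx1 := hpos x hx
    simpa using hasDerivAt_inv (by linarith : x ≠ 0)
  have hv : ∀ x ∈ Set.uIcc (1:ℝ) a, HasDerivAt (fun y : ℝ => Real.sin (2*y) / 2) (Real.cos (2*x)) x := by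
    intro x _
    have h1 : HasDerivAt (fun y : ℝ => 2*y) 2 x := by
      simpa using (hasDerivAt_id x).const_mul 2
    have h2 : HasDerivAt (fun y : ℝ => Real.sin (2*y)) (Real.cos (2*x) * 2) x :=
      (Real.hasDerivAt_sin (2*x)).comp x h1
    have := h2.div_const 2
    exact this.congr_deriv (by ring)
  have hu' : IntervalIntegrable (fun x : ℝ => -(x^2)⁻¹) volume 1 a := by
    apply ContinuousOn.intervalIntegrable
    apply ContinuousOn.neg
    apply ContinuousOn.inv₀ (by fun_prop)
    intro x hx
    have := hpos x hx
    positivity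
  have hv' : IntervalIntegrable (fun x : ℝ => Real.cos (2*x)) volume 1 a :=
    (Continuous.intervalIntegrable (by fun_prop) 1 a)
  have hibp := intervalIntegral.integral_mul_deriv_eq_deriv_mul hu hv hu' hv'
  have heq : ∫ x in (1:ℝ)..a, Real.cos (2*x) / x = ∫ x in (1:ℝ)..a, x⁻¹ * Real.cos (2*x) := by
    apply intervalIntegral.integral_congr
    intro x hx
    have := hpos x hx
    field_simp
  rw [heq, hibp]
  -- bound the remaining integral
  have h3 : |∫ x in (1:ℝ)..a, -(x^2)⁻¹ * (Real.sin (2*x) / 2)| ≤ 1/2 := by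
    have hb1 : |∫ x in (1:ℝ)..a, -(x^2)⁻¹ * (Real.sin (2*x) / 2)| ≤
        ∫ x in (1:ℝ)..a, |-(x^2)⁻¹ * (Real.sin (2*x) / 2)| :=
      intervalIntegral.abs_integral_le_integral_abs ha
    have hb2 : (∫ x in (1:ℝ)..a, |-(x^2)⁻¹ * (Real.sin (2*x) / 2)|) ≤
        ∫ x in (1:ℝ)..a, (x:ℝ)^(-2:ℤ) * (1/2) := by
      apply intervalIntegral.integral_mono_on ha
      · apply ContinuousOn.intervalIntegrable
        apply ContinuousOn.abs
        apply ContinuousOn.mul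
        · apply ContinuousOn.neg
          apply ContinuousOn.inv₀ (by fun_prop)
          intro x hx; have := hpos x hx; positivity
        · fun_prop
      · apply ContinuousOn.intervalIntegrable
        apply ContinuousOn.mul _ continuousOn_const
        apply ContinuousOn.zpow₀ (by fun_prop)
        intro x hx; left; have := hpos x hx; intro h; rw [h] at this; linarith
      · intro x hx
        have hx1 : (1:ℝ) ≤ x := hx.1
        have hs1 : |Real.sin (2*x)| ≤ 1 := Real.abs_sin_le_one (2*x)
        have hx2 : (0:ℝ) < x^2 := by positivity
        rw [abs_mul, abs_div, abs_neg, abs_inv, abs_of_pos hx2]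
        rw [show |(2:ℝ)| = 2 by norm_num, show ((x:ℝ)^(-2:ℤ)) = (x^2)⁻¹ by
          rw [zpow_neg]; norm_num [zpow_two, sq]]
        gcongr
    have hb3 : (∫ x in (1:ℝ)..a, (x:ℝ)^(-2:ℤ) * (1/2)) ≤ 1/2 := by
      have hzp : ∫ x in (1:ℝ)..a, (x:ℝ)^(-2:ℤ) = (a^(-1:ℤ) - 1^(-1:ℤ))/((-2:ℤ)+1) := by
        have := integral_zpow (a := (1:ℝ)) (b := a) (n := -2)
          (Or.inr ⟨by norm_num, by rw [Set.uIcc_of_le ha]; intro h; exact absurd h.1 (by norm_num)⟩)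
        simpa using this
      rw [intervalIntegral.integral_mul_const, hzp]
      have ha0 : (0:ℝ) < a := by linarith
      have hainv : a⁻¹ ≤ 1 := by
        rw [inv_le_one_iff₀]; right; exact ha
      have hainv0 : 0 ≤ a⁻¹ := by positivity
      push_cast
      rw [zpow_neg, zpow_one]
      norm_num
      nlinarith
    calc |∫ x in (1:ℝ)..a, -(x^2)⁻¹ * (Real.sin (2*x) / 2)| ≤ _ := hb1
      _ ≤ _ := hb2
      _ ≤ 1/2 := hb3
  have hA : |a⁻¹ * (Real.sin (2*a)/2)| ≤ 1/2 := by
    have hs := Real.abs_sin_le_one (2*a)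
    have hs0 : 0 ≤ |Real.sin (2*a)| := abs_nonneg _
    have ha0 : (0:ℝ) < a := by linarith
    have h1 : a⁻¹ ≤ 1 := by rw [inv_le_one_iff₀]; right; exact ha
    have h2 : 0 ≤ a⁻¹ := by positivity
    rw [abs_mul, abs_div, abs_inv, abs_of_pos ha0, show |(2:ℝ)| = 2 by norm_num]
    nlinarith
  have hB : |(1:ℝ)⁻¹ * (Real.sin (2*1)/2)| ≤ 1/2 := by
    have hs := Real.abs_sin_le_one (2*1)
    rw [abs_mul, abs_div, show |((1:ℝ)⁻¹)| = 1 by norm_num, show |(2:ℝ)| = 2 by norm_num]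
    rw [one_mul]
    norm_num at hs ⊢
    linarith
  calc |a⁻¹ * (Real.sin (2*a)/2) - 1⁻¹ * (Real.sin (2*1)/2)
        - ∫ x in (1:ℝ)..a, -(x^2)⁻¹ * (Real.sin (2*x)/2)|
      ≤ |a⁻¹ * (Real.sin (2*a)/2)| + |(1:ℝ)⁻¹ * (Real.sin (2*1)/2)|
        + |∫ x in (1:ℝ)..a, -(x^2)⁻¹ * (Real.sin (2*x)/2)| := by
        exact (abs_sub _ _).trans (by gcongr; exact abs_sub _ _)
    _ ≤ 1/2 + 1/2 + 1/2 := by gcongr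
    _ = 3/2 := by norm_num

lemma sinsq_int_lb {a : ℝ} (ha : 1 ≤ a) :
    (1/2) * Real.log a - 3/4 ≤ ∫ u in (1:ℝ)..a, Real.sin u ^ 2 / u := by
  have hIcc : Set.uIcc (1:ℝ) a = Set.Icc 1 a := Set.uIcc_of_le ha
  have hpos : ∀ x ∈ Set.uIcc (1:ℝ) a, (1:ℝ) ≤ x := by
    intro x hx; rw [hIcc] at hx; exact hx.1
  have hsplit : ∫ u in (1:ℝ)..a, Real.sin u ^ 2 / u
      = (∫ u in (1:ℝ)..a, (1/2) * u⁻¹) - ∫ u in (1:ℝ)..a, (1/2) * (Real.cos (2*u) / u) := by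
    rw [← intervalIntegral.integral_sub]
    · apply intervalIntegral.integral_congr
      intro u hu
      have hu1 := hpos u hu
      have hsq : Real.sin u ^ 2 = 1/2 - Real.cos (2*u)/2 := by
        have h1 := Real.sin_sq u
        have h2 := Real.cos_sq u
        rw [h1, h2]; ring
      simp only
      rw [hsq]
      have hu0 : u ≠ 0 := by intro h; rw [h] at hu1; linarith
      field_simp
    · apply ContinuousOn.intervalIntegrable
      apply ContinuousOn.mul continuousOn_const
      apply ContinuousOn.inv₀ (by fun_prop)
      intro x hx; have := hpos x hx; intro h; rw [h] at this; linarith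
    · apply ContinuousOn.intervalIntegrable
      apply ContinuousOn.mul continuousOn_const
      apply ContinuousOn.div (by fun_prop) (by fun_prop)
      intro x hx; have := hpos x hx; intro h; rw [h] at this; linarith
  have hlog : ∫ u in (1:ℝ)..a, (1/2) * u⁻¹ = (1/2) * Real.log a := by
    rw [intervalIntegral.integral_const_mul, integral_inv]
    · norm_num
    · rw [hIcc]; intro h; exact absurd h.1 (by norm_num)
  have hcos : ∫ u in (1:ℝ)..a, (1/2) * (Real.cos (2*u) / u)
      = (1/2) * ∫ u in (1:ℝ)..a, Real.cos (2*u) / u := intervalIntegral.integral_const_mul _ _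
  rw [hsplit, hlog, hcos]
  have hb := cos_int_bound ha
  have := abs_le.1 hb
  linarith [this.2]

/-- Lemma 6.6: logarithmic lower bound for the oscillatory integral. -/
theorem stmt18 :
    ∃ C t₀ : ℝ, 0 < C ∧ 1 < t₀ ∧
      ∀ t : ℝ, t₀ ≤ t →
        C * Real.log t ≤
          ∫ w in Set.Ioi (0 : ℝ),
            Real.exp (-w ^ 2) * Real.sin (Real.sqrt t * w) ^ 2 / w := by
  refine ⟨(Real.exp 1)⁻¹ / 8, Real.exp 6, by positivity, ?_, ?_⟩
  · calc (1:ℝ) = Real.exp 0 := Real.exp_zero.symm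
      _ < Real.exp 6 := Real.exp_lt_exp.2 (by norm_num)
  intro t ht
  have ht1 : (1:ℝ) ≤ t := le_trans (by
    calc (1:ℝ) = Real.exp 0 := Real.exp_zero.symm
      _ ≤ Real.exp 6 := Real.exp_le_exp.2 (by norm_num)) ht
  have ht0 : (0:ℝ) < t := by linarith
  set a := Real.sqrt t with ha_def
  have ha1 : (1:ℝ) ≤ a := by
    rw [ha_def, show (1:ℝ) = Real.sqrt 1 by rw [Real.sqrt_one]]
    exact Real.sqrt_le_sqrt ht1
  have ha0 : (0:ℝ) < a := by linarith
  have hainv : a⁻¹ ≤ 1 := by rw [inv_le_one_iff₀]; right; exact ha1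
  have hainv0 : (0:ℝ) < a⁻¹ := by positivity
  -- step A: restrict to Ioc a⁻¹ 1
  have hstepA : (∫ w in Set.Ioc a⁻¹ 1, Real.exp (-w^2) * Real.sin (a*w)^2 / w)
      ≤ ∫ w in Set.Ioi (0:ℝ), Real.exp (-w^2) * Real.sin (a*w)^2 / w := by
    apply setIntegral_mono_set (integrable_f a)
    · rw [Filter.EventuallyLE, ae_restrict_iff' measurableSet_Ioi]
      filter_upwards with w hw
      have : (0:ℝ) < w := hw
      positivity
    · apply Filter.Eventually.of_forall
      intro w hw
      exact lt_trans hainv0 hw.1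
  -- step B: as interval integral
  have hstepB : (∫ w in Set.Ioc a⁻¹ 1, Real.exp (-w^2) * Real.sin (a*w)^2 / w)
      = ∫ w in a⁻¹..1, Real.exp (-w^2) * Real.sin (a*w)^2 / w :=
    (intervalIntegral.integral_of_le hainv).symm
  have hIcc : Set.uIcc a⁻¹ (1:ℝ) = Set.Icc a⁻¹ 1 := Set.uIcc_of_le hainv
  have hposw : ∀ w ∈ Set.uIcc a⁻¹ (1:ℝ), 0 < w ∧ w ≤ 1 := by
    intro w hw; rw [hIcc] at hw; exact ⟨lt_of_lt_of_le hainv0 hw.1, hw.2⟩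
  -- step C: lower-bound exp factor
  have hstepC : (∫ w in a⁻¹..1, (Real.exp 1)⁻¹ * (Real.sin (a*w)^2 / w))
      ≤ ∫ w in a⁻¹..1, Real.exp (-w^2) * Real.sin (a*w)^2 / w := by
    apply intervalIntegral.integral_mono_on hainv
    · apply ContinuousOn.intervalIntegrable
      apply ContinuousOn.mul continuousOn_const
      apply ContinuousOn.div (by fun_prop) (by fun_prop)
      intro w hw; exact ne_of_gt (hposw w hw).1
    · apply ContinuousOn.intervalIntegrable
      apply ContinuousOn.div (by fun_prop) (by fun_prop)
      intro w hw; exact ne_of_gt (hposw w hw).1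
    · intro w hw
      have hw' := hposw w (by rwa [hIcc])
      have h1 : (Real.exp 1)⁻¹ ≤ Real.exp (-w^2) := by
        rw [← Real.exp_neg]
        apply Real.exp_le_exp.2
        nlinarith [hw'.1, hw'.2]
      have h2 : 0 ≤ Real.sin (a*w)^2 / w := div_nonneg (sq_nonneg _) hw'.1.le
      calc (Real.exp 1)⁻¹ * (Real.sin (a*w)^2 / w) ≤ Real.exp (-w^2) * (Real.sin (a*w)^2 / w) := by
            gcongr
        _ = Real.exp (-w^2) * Real.sin (a*w)^2 / w := by ring
  -- step D: change of variables
  have hstepD : (∫ w in a⁻¹..1, Real.sin (a*w)^2 / w) = ∫ u in (1:ℝ)..a, Real.sin u ^ 2 / u := by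
    have h1 : ∀ w ∈ Set.uIcc a⁻¹ (1:ℝ),
        Real.sin (a*w)^2 / w = a * ((fun u => Real.sin u ^ 2 / u) (a*w)) := by
      intro w hw
      have hw0 := (hposw w hw).1
      simp only
      rw [eq_comm]
      field_simp
    rw [intervalIntegral.integral_congr h1, intervalIntegral.integral_const_mul,
      intervalIntegral.integral_comp_mul_left (fun u => Real.sin u ^ 2 / u) (ne_of_gt ha0)]
    rw [mul_inv_cancel₀ (ne_of_gt ha0), mul_one, smul_eq_mul]
    rw [← mul_assoc, mul_inv_cancel₀ (ne_of_gt ha0), one_mul]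
  -- assemble
  have hlogt : Real.log a = (1/2) * Real.log t := by
    rw [ha_def, Real.log_sqrt ht0.le]; ring
  have hlogt6 : (6:ℝ) ≤ Real.log t := by
    calc (6:ℝ) = Real.log (Real.exp 6) := (Real.log_exp 6).symm
      _ ≤ Real.log t := Real.log_le_log (Real.exp_pos 6) ht
  have hkey := sinsq_int_lb ha1
  have hfinal : (Real.exp 1)⁻¹ / 8 * Real.log t
      ≤ (Real.exp 1)⁻¹ * ((1/2) * Real.log a - 3/4) := by
    rw [hlogt]
    have he : (0:ℝ) < (Real.exp 1)⁻¹ := by positivity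
    nlinarith
  calc (Real.exp 1)⁻¹ / 8 * Real.log t
      ≤ (Real.exp 1)⁻¹ * ((1/2) * Real.log a - 3/4) := hfinal
    _ ≤ (Real.exp 1)⁻¹ * ∫ u in (1:ℝ)..a, Real.sin u ^ 2 / u := by gcongr
    _ = ∫ w in a⁻¹..1, (Real.exp 1)⁻¹ * (Real.sin (a*w)^2 / w) := by
        rw [intervalIntegral.integral_const_mul, hstepD]
    _ ≤ ∫ w in a⁻¹..1, Real.exp (-w^2) * Real.sin (a*w)^2 / w := hstepC
    _ = ∫ w in Set.Ioc a⁻¹ 1, Real.exp (-w^2) * Real.sin (a*w)^2 / w := hstepB.symm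
    _ ≤ ∫ w in Set.Ioi (0:ℝ), Real.exp (-w^2) * Real.sin (a*w)^2 / w := hstepA

end
end
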